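/- Let (R,m) be a noetherian local ring and A a Matlis-reflexive R-module. Then A/P(A) is finitely generated, where P(A) denotes the largest radical-full (divisible: P(A) = m·P(A)) submodule of A. -/

import Mathlib

open IsLocalRing Pointwise

universe u v

variable (R : Type u) [CommRing R]

/-- A submodule `A ⊆ B` is pure if for every module `X`, `X ⊗ A → X ⊗ B` is injective. -/
def IsPureSubmodule {B : Type v} [AddCommGroup B] [Module R B] (A : Submodule R B) : Prop :=
  ∀ (X : Type v) [AddCommGroup X] [Module R X],
    Function.Injective (LinearMap.lTensor X A.subtype)

/-- A linear map is a pure monomorphism if it is injective with pure range. -/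
def IsPureMono {M N : Type v} [AddCommGroup M] [Module R M]
    [AddCommGroup N] [Module R N] (f : M →ₗ[R] N) : Prop :=
  Function.Injective f ∧ IsPureSubmodule R (LinearMap.range f)

/-- A submodule `A ⊆ B` is pure-essential if it is pure and for every `X ⊆ B` with
`X ⊓ A = ⊥` and `(X ⊕ A)/X` pure in `B/X`, one has `X = ⊥`. -/
def IsPureEssential {B : Type v} [AddCommGroup B] [Module R B] (A : Submodule R B) : Prop :=
  IsPureSubmodule R A ∧
    ∀ X : Submodule R B, X ⊓ A = ⊥ → IsPureSubmodule R (A.map X.mkQ) → X = ⊥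

/-- An injective linear map is a pure-essential embedding if its range is pure-essential. -/
def IsPureEssentialEmb {M N : Type v} [AddCommGroup M] [Module R M]
    [AddCommGroup N] [Module R N] (f : M →ₗ[R] N) : Prop :=
  Function.Injective f ∧ IsPureEssential R (LinearMap.range f)

/-- `A ⊆ B` is strictly pure-essential if `A` is pure in `B` and every homomorphism out of `B`
restricting to a pure monomorphism on `A` is itself a pure monomorphism. -/
def IsStrictlyPureEssential {B : Type v} [AddCommGroup B] [Module R B]
    (A : Submodule R B) : Prop :=
  IsPureSubmodule R A ∧
    ∀ (Y : Type v) [AddCommGroup Y] [Module R Y] (f : B →ₗ[R] Y),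
      IsPureMono R (f ∘ₗ A.subtype) → IsPureMono R f

/-- `B` is an injective hull of `A` (via some embedding with essential range). -/
def IsInjectiveHull (A : Type v) (B : Type v) [AddCommGroup A] [Module R A]
    [AddCommGroup B] [Module R B] : Prop :=
  Module.Injective R B ∧ ∃ f : A →ₗ[R] B, Function.Injective f ∧
    ∀ X : Submodule R B, X ≠ ⊥ → X ⊓ LinearMap.range f ≠ ⊥

/-- The Matlis evaluation map `M → Hom(Hom(M,E),E)`. -/
noncomputable def matlisEval (E M : Type v) [AddCommGroup E] [Module R E]
    [AddCommGroup M] [Module R M] : M →ₗ[R] ((M →ₗ[R] E) →ₗ[R] E) :=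
  LinearMap.applyₗ

/-- `M` is Matlis-reflexive (w.r.t. `E`). -/
def IsMatlisReflexive (E M : Type v) [AddCommGroup E] [Module R E]
    [AddCommGroup M] [Module R M] : Prop :=
  Function.Bijective (matlisEval R E M)

/-- `M` is quasi-reflexive: the canonical map `M → M°°` is a pure-essential embedding. -/
def IsQuasiReflexive (E M : Type v) [AddCommGroup E] [Module R E]
    [AddCommGroup M] [Module R M] : Prop :=
  IsPureEssentialEmb R (matlisEval R E M)

/-- The largest radical-full submodule `P(M)` (sum of all `V` with `V = m V`). -/
def radicalFullPart [IsLocalRing R] (M : Type v) [AddCommGroup M] [Module R M] :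
    Submodule R M :=
  sSup {V : Submodule R M | V = maximalIdeal R • V}

/-- The largest divisible submodule `D(M)` (w.r.t. non-zerodivisors). -/
def divisiblePart (M : Type v) [AddCommGroup M] [Module R M] : Submodule R M :=
  sSup {V : Submodule R M | ∀ r ∈ nonZeroDivisors R, V ≤ r • V}

section Aux

variable {R : Type u} [CommRing R] [IsLocalRing R] {E : Type u} [AddCommGroup E] [Module R E]

lemma matlisEval_apply {M : Type u} [AddCommGroup M] [Module R M] (x : M) (g : M →ₗ[R] E) :
    matlisEval R E M x g = g x := rfl

/-- E is a cogenerator: any nonzero element of any module admits a functional to `E`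
not vanishing on it. -/
lemma aux_cogen (hE : IsInjectiveHull R (R ⧸ maximalIdeal R) E)
    {M : Type u} [AddCommGroup M] [Module R M] {x : M} (hx : x ≠ 0) :
    ∃ g : M →ₗ[R] E, g x ≠ 0 := by
  obtain ⟨hEi, f, hf, -⟩ := hE
  set I : Ideal R := LinearMap.ker (LinearMap.toSpanSingleton R M x) with hIdef
  have hInetop : I ≠ ⊤ := by
    intro h
    have h1 : (1 : R) ∈ I := h ▸ Submodule.mem_top
    have h2 : (1 : R) • x = 0 := h1
    rw [one_smul] at h2
    exact hx h2
  have hIm : I ≤ maximalIdeal R := IsLocalRing.le_maximalIdeal hInetop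
  let φ : (R ⧸ I) →ₗ[R] M := I.liftQ (LinearMap.toSpanSingleton R M x) le_rfl
  have hφ : Function.Injective φ := by
    rw [← LinearMap.ker_eq_bot]
    exact Submodule.ker_liftQ_eq_bot _ _ _ le_rfl
  let ρ : (R ⧸ I) →ₗ[R] (R ⧸ maximalIdeal R) :=
    Submodule.mapQ I (maximalIdeal R) LinearMap.id (by simpa using hIm)
  obtain ⟨h, hh⟩ := hEi.out φ hφ (f ∘ₗ ρ)
  refine ⟨h, ?_⟩
  have h1 : φ (Submodule.Quotient.mk 1) = x := by
    rw [Submodule.liftQ_apply, LinearMap.toSpanSingleton_apply, one_smul]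
  have h2 : h x = f (ρ (Submodule.Quotient.mk 1)) := by
    rw [← h1, hh]; rfl
  have h3 : ρ (Submodule.Quotient.mk 1) = Submodule.Quotient.mk 1 := by
    rw [Submodule.mapQ_apply]; rfl
  rw [h2, h3]
  intro hc
  have : (Submodule.Quotient.mk (1:R) : R ⧸ maximalIdeal R) = 0 := by
    apply hf; simpa using hc
  rw [Submodule.Quotient.mk_eq_zero] at this
  exact (Ideal.IsMaximal.ne_top (IsLocalRing.maximalIdeal.isMaximal R))
    ((Ideal.eq_top_iff_one _).mpr this)

/-- Separation form of the cogenerator property. -/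
lemma aux_sep (hE : IsInjectiveHull R (R ⧸ maximalIdeal R) E)
    {M : Type u} [AddCommGroup M] [Module R M] {U : Submodule R M} {x : M} (hx : x ∉ U) :
    ∃ g : M →ₗ[R] E, (∀ u ∈ U, g u = 0) ∧ g x ≠ 0 := by
  have hx' : U.mkQ x ≠ 0 := by
    rw [Submodule.mkQ_apply, ne_eq, Submodule.Quotient.mk_eq_zero]
    exact hx
  obtain ⟨g₀, hg₀⟩ := aux_cogen hE hx'
  refine ⟨g₀ ∘ₗ U.mkQ, fun u hu => ?_, hg₀⟩
  have : U.mkQ u = 0 := by rwa [Submodule.mkQ_apply, Submodule.Quotient.mk_eq_zero]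
  simp [this]

/-- Surjectivity of the Matlis evaluation map passes to quotients. -/
lemma aux_quot_surj (hEi : Module.Injective R E)
    {M N : Type u} [AddCommGroup M] [Module R M] [AddCommGroup N] [Module R N]
    (π : M →ₗ[R] N) (hπ : Function.Surjective π)
    (hM : Function.Surjective (matlisEval R E M)) :
    Function.Surjective (matlisEval R E N) := by
  intro φ
  let πd : (N →ₗ[R] E) →ₗ[R] (M →ₗ[R] E) := LinearMap.lcomp R E π
  have hπd : Function.Injective πd := by
    intro g₁ g₂ hg
    ext n
    obtain ⟨m, rfl⟩ := hπ n
    exact LinearMap.congr_fun hg m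
  obtain ⟨ψ, hψ⟩ := hEi.out πd hπd φ
  obtain ⟨m₀, hm₀⟩ := hM ψ
  refine ⟨π m₀, ?_⟩
  ext g
  calc matlisEval R E N (π m₀) g = g (π m₀) := rfl
    _ = matlisEval R E M m₀ (πd g) := rfl
    _ = ψ (πd g) := by rw [hm₀]
    _ = φ g := hψ g

/-- The socle of `E` is exactly the canonical copy of the residue field. -/
lemma aux_socle (hE : IsInjectiveHull R (R ⧸ maximalIdeal R) E) :
    ∃ f : (R ⧸ maximalIdeal R) →ₗ[R] E, Function.Injective f ∧
      ∀ e : E, (∀ a ∈ maximalIdeal R, a • e = 0) → e ∈ LinearMap.range f := by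
  obtain ⟨hEi, f, hf, hess⟩ := hE
  refine ⟨f, hf, fun e he => ?_⟩
  by_cases h0 : e = 0
  · exact h0 ▸ zero_mem _
  have hs : Submodule.span R {e} ≠ ⊥ := by
    simpa [Submodule.span_singleton_eq_bot] using h0
  have hne := hess _ hs
  obtain ⟨y, hy, hy0⟩ := Submodule.exists_mem_ne_zero_of_ne_bot hne
  obtain ⟨hy1, hy2⟩ := Submodule.mem_inf.mp hy
  obtain ⟨r, hr⟩ := Submodule.mem_span_singleton.mp hy1
  have hrm : r ∉ maximalIdeal R := fun hrm => hy0 (by rw [← hr, he r hrm])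
  have hru : IsUnit r := by
    by_contra hc
    exact hrm ((IsLocalRing.mem_maximalIdeal r).mpr (mem_nonunits_iff.mpr hc))
  obtain ⟨u, rfl⟩ := hru
  have he2 : e = (↑u⁻¹ : R) • y := by
    rw [← hr, smul_smul, Units.inv_mul, one_smul]
  rw [he2]
  exact Submodule.smul_mem _ _ hy2

/-- For an `m`-torsion module `M`, `Hom(M, E) ≃ Hom(M, k)`. -/
noncomputable def dualEquiv (f : (R ⧸ maximalIdeal R) →ₗ[R] E) (hf : Function.Injective f)
    (hK : ∀ e : E, (∀ a ∈ maximalIdeal R, a • e = 0) → e ∈ LinearMap.range f)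
    (M : Type u) [AddCommGroup M] [Module R M]
    (htor : ∀ a ∈ maximalIdeal R, ∀ x : M, a • x = 0) :
    (M →ₗ[R] E) ≃ₗ[R] (M →ₗ[R] (R ⧸ maximalIdeal R)) := by
  have hmem : ∀ (g : M →ₗ[R] E) (w : M), g w ∈ LinearMap.range f := fun g w =>
    hK _ (fun a ha => by rw [← map_smul, htor a ha w, map_zero])
  have hcomp : ∀ (e : E) (he : e ∈ LinearMap.range f),
      f ((LinearEquiv.ofInjective f hf).symm ⟨e, he⟩) = e := by
    intro e he
    rw [← LinearEquiv.ofInjective_apply f (h := hf), LinearEquiv.apply_symm_apply]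
  refine LinearEquiv.ofLinear
    { toFun := fun g => (LinearEquiv.ofInjective f hf).symm.toLinearMap ∘ₗ
        LinearMap.codRestrict (LinearMap.range f) g (hmem g)
      map_add' := ?_
      map_smul' := ?_ }
    (LinearMap.llcomp R M (R ⧸ maximalIdeal R) E f) ?_ ?_
  · intro g₁ g₂
    ext w
    apply hf
    simp only [LinearMap.comp_apply, LinearMap.codRestrict_apply, LinearMap.add_apply,
      LinearEquiv.coe_coe, map_add]
    rw [hcomp, hcomp, hcomp]
    simp [LinearMap.codRestrict_apply]
  · intro r g
    ext w
    apply hf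
    simp only [LinearMap.comp_apply, LinearMap.codRestrict_apply, LinearMap.smul_apply,
      LinearEquiv.coe_coe, RingHom.id_apply, map_smul]
    rw [hcomp, hcomp]
    simp [LinearMap.codRestrict_apply]
  · ext g w
    simp only [LinearMap.comp_apply, LinearMap.codRestrict_apply, LinearMap.llcomp_apply,
      LinearEquiv.coe_coe, LinearMap.id_apply, LinearMap.coe_mk, AddHom.coe_mk]
    apply hf
    rw [hcomp]
    rfl
  · ext g w
    simp only [LinearMap.comp_apply, LinearMap.codRestrict_apply, LinearMap.llcomp_apply,
      LinearEquiv.coe_coe, LinearMap.id_apply, LinearMap.coe_mk, AddHom.coe_mk]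
    rw [hcomp]
    rfl

/-- An `m`-torsion module whose Matlis evaluation is surjective is finitely generated. -/
lemma aux_findim (hE : IsInjectiveHull R (R ⧸ maximalIdeal R) E)
    {W : Type u} [AddCommGroup W] [Module R W]
    (htor : ∀ a ∈ maximalIdeal R, ∀ x : W, a • x = 0)
    (hsurj : Function.Surjective (matlisEval R E W)) :
    Module.Finite R W := by
  obtain ⟨f, hf, hK⟩ := aux_socle hE
  haveI : (maximalIdeal R).IsMaximal := IsLocalRing.maximalIdeal.isMaximal R
  letI : Field (R ⧸ maximalIdeal R) := Ideal.Quotient.field _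
  have htorW : Module.IsTorsionBySet R W (maximalIdeal R : Set R) :=
    fun x a => htor a.1 a.2 x
  have htorD : Module.IsTorsionBySet R (W →ₗ[R] E) (maximalIdeal R : Set R) := by
    intro g a
    ext w
    rw [LinearMap.smul_apply, ← map_smul, htor a.1 a.2 w, map_zero, LinearMap.zero_apply]
  letI : Module (R ⧸ maximalIdeal R) W := htorW.module
  letI : Module (R ⧸ maximalIdeal R) (W →ₗ[R] E) := htorD.module
  haveI : IsScalarTower R (R ⧸ maximalIdeal R) W := htorW.isScalarTower
  haveI : IsScalarTower R (R ⧸ maximalIdeal R) (W →ₗ[R] E) := htorD.isScalarTower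
  haveI : SMulCommClass (R ⧸ maximalIdeal R) R (R ⧸ maximalIdeal R) :=
    SMulCommClass.symm R (R ⧸ maximalIdeal R) (R ⧸ maximalIdeal R)
  have halg : Function.Surjective (algebraMap R (R ⧸ maximalIdeal R)) := by
    rw [Ideal.Quotient.algebraMap_eq]
    exact Ideal.Quotient.mk_surjective
  haveI twr1 : IsScalarTower R (R ⧸ maximalIdeal R) (W →ₗ[(R ⧸ maximalIdeal R)] (R ⧸ maximalIdeal R)) :=
    ⟨fun r c g => LinearMap.ext fun w => smul_assoc r c (g w)⟩
  haveI twr2 : IsScalarTower R (R ⧸ maximalIdeal R)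
      ((W →ₗ[(R ⧸ maximalIdeal R)] (R ⧸ maximalIdeal R)) →ₗ[(R ⧸ maximalIdeal R)] (R ⧸ maximalIdeal R)) :=
    ⟨fun r c g => LinearMap.ext fun w => smul_assoc r c (g w)⟩
  -- the dual of W, and the double dual, over the residue field
  let e1 : (W →ₗ[R] E) ≃ₗ[R] (W →ₗ[R] (R ⧸ maximalIdeal R)) := dualEquiv f hf hK W htor
  let e2 : ((W →ₗ[R] E) →ₗ[R] E) ≃ₗ[R] ((W →ₗ[R] E) →ₗ[R] (R ⧸ maximalIdeal R)) :=
    dualEquiv f hf hK (W →ₗ[R] E) (fun a ha g => @htorD g ⟨a, ha⟩)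
  let e3 : (W →ₗ[R] (R ⧸ maximalIdeal R)) ≃ₗ[R] (W →ₗ[(R ⧸ maximalIdeal R)] (R ⧸ maximalIdeal R)) :=
    LinearMap.extendScalarsOfSurjectiveEquiv halg
  let u : (W →ₗ[R] E) ≃ₗ[(R ⧸ maximalIdeal R)] (W →ₗ[(R ⧸ maximalIdeal R)] (R ⧸ maximalIdeal R)) :=
    LinearEquiv.extendScalarsOfSurjective halg (e1.trans e3)
  let e4 : ((W →ₗ[R] E) →ₗ[R] (R ⧸ maximalIdeal R)) ≃ₗ[R]
      ((W →ₗ[R] E) →ₗ[(R ⧸ maximalIdeal R)] (R ⧸ maximalIdeal R)) :=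
    LinearMap.extendScalarsOfSurjectiveEquiv halg
  let e5 : ((W →ₗ[R] E) →ₗ[(R ⧸ maximalIdeal R)] (R ⧸ maximalIdeal R)) ≃ₗ[(R ⧸ maximalIdeal R)]
      ((W →ₗ[(R ⧸ maximalIdeal R)] (R ⧸ maximalIdeal R)) →ₗ[(R ⧸ maximalIdeal R)] (R ⧸ maximalIdeal R)) :=
    u.arrowCongr (LinearEquiv.refl (R ⧸ maximalIdeal R) (R ⧸ maximalIdeal R))
  let π₀ : W →ₗ[R] ((W →ₗ[(R ⧸ maximalIdeal R)] (R ⧸ maximalIdeal R)) →ₗ[(R ⧸ maximalIdeal R)] (R ⧸ maximalIdeal R)) :=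
    ((e5.restrictScalars R).toLinearMap ∘ₗ e4.toLinearMap ∘ₗ e2.toLinearMap) ∘ₗ matlisEval R E W
  have hπ₀ : Function.Surjective π₀ := by
    simp only [π₀, LinearMap.coe_comp, LinearEquiv.coe_coe]
    exact (((e5.restrictScalars R).surjective.comp e4.surjective).comp
      e2.surjective).comp hsurj
  let π : W →ₗ[(R ⧸ maximalIdeal R)]
      ((W →ₗ[(R ⧸ maximalIdeal R)] (R ⧸ maximalIdeal R)) →ₗ[(R ⧸ maximalIdeal R)] (R ⧸ maximalIdeal R)) :=
    π₀.extendScalarsOfSurjective halg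
  have hπ : Function.Surjective π := hπ₀
  haveI : Module.Finite (R ⧸ maximalIdeal R) W := by
    by_contra hfin
    have hinf : Cardinal.aleph0 ≤ Module.rank (R ⧸ maximalIdeal R) W := by
      by_contra hlt
      exact hfin (Module.rank_lt_aleph0_iff.mp (not_le.mp hlt))
    have h1 := rank_lt_rank_dual hinf
    have h2 := rank_lt_rank_dual (hinf.trans h1.le)
    have h3 := LinearMap.rank_le_of_surjective π hπ
    exact absurd h3 (not_le.mpr (h1.trans h2))
  haveI : Module.Finite R (R ⧸ maximalIdeal R) :=
    Module.Finite.of_surjective (Algebra.linearMap R (R ⧸ maximalIdeal R)) halg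
  exact Module.Finite.trans (R ⧸ maximalIdeal R) W

/-- Key lemma: if eval is surjective on `B` and `F ⊔ mB = B` then there is a radical-full
`V` with `F ⊔ V = B`. -/
lemma aux_key (hE : IsInjectiveHull R (R ⧸ maximalIdeal R) E)
    {B : Type u} [AddCommGroup B] [Module R B]
    (hB : Function.Surjective (matlisEval R E B))
    (F : Submodule R B) (hF : F ⊔ maximalIdeal R • (⊤ : Submodule R B) = ⊤) :
    ∃ V : Submodule R B, V = maximalIdeal R • V ∧ F ⊔ V = ⊤ := by
  classical
  let annB : Submodule R (B →ₗ[R] E) → Submodule R B := fun Y =>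
    { carrier := {b | ∀ g ∈ Y, g b = 0}
      add_mem' := fun {a b} ha hb g hg => by rw [map_add, ha g hg, hb g hg, add_zero]
      zero_mem' := fun g hg => map_zero g
      smul_mem' := fun r b hb g hg => by rw [map_smul, hb g hg, smul_zero] }
  have mem_annB : ∀ (Y : Submodule R (B →ₗ[R] E)) (b : B),
      b ∈ annB Y ↔ ∀ g ∈ Y, g b = 0 := fun Y b => Iff.rfl
  have hsep : ∀ (Y : Submodule R (B →ₗ[R] E)) (h : B →ₗ[R] E), h ∉ Y →
      ∃ b ∈ annB Y, h b ≠ 0 := by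
    intro Y h hh
    obtain ⟨g, hg0, hgx⟩ := aux_sep hE hh
    obtain ⟨b, hb⟩ := hB g
    refine ⟨b, (mem_annB Y b).mpr fun g' hg' => ?_, ?_⟩
    · have hx : g g' = 0 := hg0 g' hg'
      rw [← hb] at hx
      exact hx
    · have hx : g h ≠ 0 := hgx
      rw [← hb] at hx
      exact hx
  have hclosed : ∀ (Y : Submodule R (B →ₗ[R] E)) (h : B →ₗ[R] E),
      (∀ b ∈ annB Y, h b = 0) → h ∈ Y := by
    intro Y h hall
    by_contra hh
    obtain ⟨b, hbV, hbne⟩ := hsep Y h hh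
    exact hbne (hall b hbV)
  let G : Submodule R (B →ₗ[R] E) :=
    { carrier := {g | ∀ u ∈ F, g u = 0}
      add_mem' := fun {a b} ha hb u hu => by
        rw [LinearMap.add_apply, ha u hu, hb u hu, add_zero]
      zero_mem' := fun u hu => rfl
      smul_mem' := fun r g hg u hu => by
        rw [LinearMap.smul_apply, hg u hu, smul_zero] }
  let soc : Submodule R (B →ₗ[R] E) :=
    { carrier := {g | ∀ a ∈ maximalIdeal R, a • g = 0}
      add_mem' := fun {g h} hg hh a ha => by rw [smul_add, hg a ha, hh a ha, add_zero]
      zero_mem' := fun a ha => smul_zero a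
      smul_mem' := fun r g hg a ha => by rw [smul_comm, hg a ha, smul_zero] }
  have hsocG : ∀ g, g ∈ soc → g ∈ G → g = 0 := by
    intro g hgs hgG
    ext b
    have hbtop : b ∈ F ⊔ maximalIdeal R • (⊤ : Submodule R B) := by
      rw [hF]; exact Submodule.mem_top
    obtain ⟨u, hu, v, hv, rfl⟩ := Submodule.mem_sup.mp hbtop
    rw [map_add, hgG u hu, zero_add, LinearMap.zero_apply]
    refine Submodule.smul_induction_on hv ?_ ?_
    · intro a ha x _
      have h1 : g (a • x) = (a • g) x := (map_smul g a x).trans (LinearMap.smul_apply a g x).symm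
      rw [h1, hgs a ha, LinearMap.zero_apply]
    · intro x y hx hy
      rw [map_add, hx, hy, add_zero]
  let S : Set (Submodule R (B →ₗ[R] E)) := {Y | soc ≤ Y ∧ ∀ g ∈ Y, g ∈ G → g = 0}
  have hsocS : soc ∈ S := ⟨le_rfl, fun g hg hG => hsocG g hg hG⟩
  have hchain : ∀ c ⊆ S, IsChain (· ≤ ·) c → ∀ y ∈ c, ∃ ub ∈ S, ∀ z ∈ c, z ≤ ub := by
    intro c hcS hch y hy
    refine ⟨sSup c, ⟨le_trans (hcS hy).1 (le_sSup hy), ?_⟩, fun z hz => le_sSup hz⟩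
    intro g hg hgG
    obtain ⟨Z, hZc, hgZ⟩ := (Submodule.mem_sSup_of_directed ⟨y, hy⟩ hch.directedOn).mp hg
    exact (hcS hZc).2 g hgZ hgG
  obtain ⟨Y, -, hYmax⟩ := zorn_le_nonempty₀ S hchain soc hsocS
  have hYS : Y ∈ S := hYmax.1
  have hsocfree : ∀ h : (B →ₗ[R] E), (∀ a ∈ maximalIdeal R, a • h ∈ Y) → h ∈ Y := by
    intro h hh
    by_contra hhY
    have hYlt : Y < Y ⊔ Submodule.span R {h} := by
      refine lt_of_le_of_ne le_sup_left fun he => hhY ?_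
      rw [he]
      exact Submodule.mem_sup_right (Submodule.mem_span_singleton_self h)
    have hnotS : (Y ⊔ Submodule.span R {h}) ∉ S := fun hmem =>
      (not_le_of_gt hYlt) (hYmax.2 hmem le_sup_left)
    have hex : ∃ g ∈ Y ⊔ Submodule.span R {h}, g ∈ G ∧ g ≠ 0 := by
      by_contra hno
      push_neg at hno
      exact hnotS ⟨le_trans hYS.1 le_sup_left, hno⟩
    obtain ⟨g, hgY', hgG, hgne⟩ := hex
    obtain ⟨y0, hy0, z, hz, rfl⟩ := Submodule.mem_sup.mp hgY'
    obtain ⟨r, rfl⟩ := Submodule.mem_span_singleton.mp hz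
    have hsocmem : ∀ a ∈ maximalIdeal R, a • (y0 + r • h) = 0 := by
      intro a ha
      have h1 : a • y0 ∈ Y := Y.smul_mem a hy0
      have h2 : a • (r • h) ∈ Y := by
        rw [smul_comm]
        exact Y.smul_mem r (hh a ha)
      have h3 : a • (y0 + r • h) ∈ Y := by
        rw [smul_add]
        exact Y.add_mem h1 h2
      have h4 : a • (y0 + r • h) ∈ G := G.smul_mem a hgG
      exact hYS.2 _ h3 h4
    have h5 : y0 + r • h ∈ soc := hsocmem
    exact hgne (hYS.2 _ (hYS.1 h5) hgG)
  refine ⟨annB Y, ?_, ?_⟩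
  · refine le_antisymm ?_ Submodule.smul_le_right
    intro v hv
    by_contra hvm
    obtain ⟨gg, hgg0, hggv⟩ := aux_sep hE (U := maximalIdeal R • annB Y) hvm
    have hin : ∀ a ∈ maximalIdeal R, a • gg ∈ Y := by
      intro a ha
      apply hclosed
      intro b hb
      have hab : a • b ∈ maximalIdeal R • annB Y := Submodule.smul_mem_smul ha hb
      have h1 : (a • gg) b = gg (a • b) := (LinearMap.smul_apply a gg b).trans (map_smul gg a b).symm
      rw [h1]
      exact hgg0 _ hab
    have hY : gg ∈ Y := hsocfree gg hin
    exact hggv (((mem_annB Y v).mp hv) gg hY)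
  · by_contra hne
    have hex : ∃ b, b ∉ F ⊔ annB Y := by
      by_contra hall
      push_neg at hall
      exact hne (Submodule.eq_top_iff'.mpr hall)
    obtain ⟨b, hb⟩ := hex
    obtain ⟨h, hh0, hhb⟩ := aux_sep hE hb
    have hhG : h ∈ G := fun u hu => hh0 u (Submodule.mem_sup_left hu)
    have hhY : h ∈ Y := by
      apply hclosed
      intro b' hb'
      exact hh0 b' (Submodule.mem_sup_right hb')
    have : h = 0 := hYS.2 h hhY hhG
    rw [this] at hhb
    exact hhb (LinearMap.zero_apply b)

end Aux

theorem stmt_3 [IsNoetherianRing R] [IsLocalRing R]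
    (E : Type u) [AddCommGroup E] [Module R E]
    (hE : IsInjectiveHull R (R ⧸ maximalIdeal R) E)
    (A : Type u) [AddCommGroup A] [Module R A]
    (hA : IsMatlisReflexive R E A) :
    Module.Finite R (A ⧸ radicalFullPart R A) := by
  classical
  set SS : Set (Submodule R A) := {V | V = maximalIdeal R • V} with hSS
  set P : Submodule R A := radicalFullPart R A with hPdef
  have hPsSup : P = sSup SS := rfl
  have hBsurj : Function.Surjective (matlisEval R E (A ⧸ P)) :=
    aux_quot_surj hE.1 P.mkQ (Submodule.mkQ_surjective P) hA.2
  set mtop : Submodule R (A ⧸ P) := maximalIdeal R • ⊤ with hmtop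
  have hWtor : ∀ a ∈ maximalIdeal R, ∀ x : (A ⧸ P) ⧸ mtop, a • x = 0 := by
    intro a ha x
    obtain ⟨y, rfl⟩ := Submodule.mkQ_surjective mtop x
    rw [← map_smul, Submodule.mkQ_apply, Submodule.Quotient.mk_eq_zero]
    exact Submodule.smul_mem_smul ha Submodule.mem_top
  have hWsurj : Function.Surjective (matlisEval R E ((A ⧸ P) ⧸ mtop)) :=
    aux_quot_surj hE.1 mtop.mkQ (Submodule.mkQ_surjective mtop) hBsurj
  have hWfin : Module.Finite R ((A ⧸ P) ⧸ mtop) := aux_findim hE hWtor hWsurj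
  obtain ⟨s, hs⟩ := hWfin.fg_top
  have hsec : ∀ w : (A ⧸ P) ⧸ mtop, ∃ b : A ⧸ P, mtop.mkQ b = w :=
    Submodule.mkQ_surjective mtop
  choose sec hsecspec using hsec
  set F : Submodule R (A ⧸ P) := Submodule.span R (sec '' ↑s) with hFdef
  have hFfg : F.FG := ⟨s.image sec, by rw [Finset.coe_image]⟩
  have hFsup : F ⊔ mtop = ⊤ := by
    have himg : mtop.mkQ '' (sec '' ↑s) = ↑s := by
      rw [Set.image_image]
      simp only [hsecspec, Set.image_id']
    have hmapF : Submodule.map mtop.mkQ F = ⊤ := by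
      rw [hFdef, Submodule.map_span, himg, hs]
    rw [eq_top_iff]
    intro b _
    have hmem : mtop.mkQ b ∈ Submodule.map mtop.mkQ F := by
      rw [hmapF]; exact Submodule.mem_top
    obtain ⟨u, huF, hub⟩ := Submodule.mem_map.mp hmem
    have hsub : b - u ∈ mtop := by
      rw [← Submodule.Quotient.eq]
      exact (hub.symm : mtop.mkQ b = mtop.mkQ u)
    have : u + (b - u) ∈ F ⊔ mtop :=
      Submodule.add_mem_sup huF hsub
    rwa [add_sub_cancel] at this
  obtain ⟨V, hV, hFV⟩ := aux_key hE hBsurj F hFsup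
  have hPm : P = maximalIdeal R • P := by
    refine le_antisymm ?_ Submodule.smul_le_right
    rw [hPsSup]
    apply sSup_le
    intro W hW
    rw [show W = maximalIdeal R • W from hW]
    exact Submodule.smul_mono le_rfl (le_sSup hW)
  have hVbot : V = ⊥ := by
    set U : Submodule R A := Submodule.comap P.mkQ V with hUdef
    have hPU : P ≤ U := by
      intro x hx
      show P.mkQ x ∈ V
      have hx0 : P.mkQ x = 0 := by
        rw [Submodule.mkQ_apply, Submodule.Quotient.mk_eq_zero]; exact hx
      rw [hx0]; exact V.zero_mem
    have hmapU : Submodule.map P.mkQ U = V :=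
      Submodule.map_comap_eq_of_surjective (Submodule.mkQ_surjective P) V
    have hUm : U = maximalIdeal R • U ⊔ P := by
      have h2 : Submodule.map P.mkQ (maximalIdeal R • U) = V := by
        rw [Submodule.map_smul'', hmapU, ← hV]
      have h3 : Submodule.comap P.mkQ (Submodule.map P.mkQ (maximalIdeal R • U)) =
          maximalIdeal R • U ⊔ P := by
        rw [Submodule.comap_map_eq, Submodule.ker_mkQ]
      rw [← h3, h2]
    have hUm2 : U = maximalIdeal R • U := by
      have h4 : maximalIdeal R • U ⊔ P = maximalIdeal R • U := by
        conv_lhs => rw [hPm]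
        rw [← Submodule.smul_sup, sup_eq_left.mpr hPU]
      exact hUm.trans h4
    have hUP : U ≤ P := by
      rw [hPsSup]
      exact le_sSup (show U ∈ SS from hUm2)
    have hUeq : U = P := le_antisymm hUP hPU
    rw [← hmapU, hUeq]
    refine (Submodule.eq_bot_iff _).mpr ?_
    rintro x ⟨y, hy, rfl⟩
    rw [Submodule.mkQ_apply, Submodule.Quotient.mk_eq_zero]
    exact hy
  rw [hVbot, sup_bot_eq] at hFV
  exact ⟨hFV ▸ hFfg⟩
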